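/- For every scaling factor S > 0, the optimum of the floor-scaled graph satisfies C_opt(G)/S − n ≤ C_opt(G↓S) ≤ C_opt(G)/S. -/

import Mathlib

/-- `IsWalk tl hd u v p` : the list of edges `p` forms a walk from `u` to `v`
in the directed multigraph whose edges `e` go from `tl e` to `hd e`. -/
def IsWalk {V E : Type} (tl hd : E → V) : V → V → List E → Prop
  | u, v, [] => u = v
  | u, v, e :: es => tl e = u ∧ IsWalk tl hd (hd e) v es

/-- `IsPath tl hd u v p` : `p` is a walk from `u` to `v` visiting pairwise
distinct vertices. -/
def IsPath {V E : Type} (tl hd : E → V) (u v : V) (p : List E) : Prop :=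
  IsWalk tl hd u v p ∧ (u :: p.map hd).Nodup

lemma sum_map_div_aux {α : Type} (f : α → ℝ) (S : ℝ) :
    ∀ l : List α, (l.map fun e => f e / S).sum = (l.map f).sum / S
  | [] => by simp
  | a :: l => by simp [sum_map_div_aux f S l, add_div]

lemma sum_map_scaled_aux {α : Type} (f : α → ℝ) (S : ℝ) :
    ∀ l : List α, (l.map fun e => S * (f e + 1)).sum = S * (l.map f).sum + S * l.length
  | [] => by simp
  | a :: l => by simp [sum_map_scaled_aux f S l]; ring

/-- Lemma: for every scaling factor `S > 0`, the optimum `CoptS` of the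
floor-scaled graph satisfies `Copt/S - n ≤ CoptS ≤ Copt/S`. -/
theorem stmt_0 {V E : Type} [Fintype V] [Fintype E]
    (tl hd : E → V) (c r : E → ℝ)
    (hc : ∀ e, 0 ≤ c e) (hr : ∀ e, 0 ≤ r e)
    (hn : 2 ≤ Fintype.card V)
    (s t : V) (hst : s ≠ t) (R : ℝ) (hR : 0 ≤ R)
    -- `Copt` is the minimum cost of a feasible s–t path
    (Copt : ℝ)
    (hCopt₁ : ∃ p, IsPath tl hd s t p ∧ (p.map r).sum ≤ R ∧ (p.map c).sum = Copt)
    (hCopt₂ : ∀ p, IsPath tl hd s t p → (p.map r).sum ≤ R → Copt ≤ (p.map c).sum)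
    (S : ℝ) (hS : 0 < S)
    -- `CoptS` is the minimum floor-scaled cost of a feasible s–t path
    (CoptS : ℝ)
    (hCoptS₁ : ∃ p, IsPath tl hd s t p ∧ (p.map r).sum ≤ R ∧
      (p.map fun e => (⌊c e / S⌋ : ℝ)).sum = CoptS)
    (hCoptS₂ : ∀ p, IsPath tl hd s t p → (p.map r).sum ≤ R →
      CoptS ≤ (p.map fun e => (⌊c e / S⌋ : ℝ)).sum) :
    Copt / S - Fintype.card V ≤ CoptS ∧ CoptS ≤ Copt / S := by
  obtain ⟨p, hp, hpr, hpc⟩ := hCopt₁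
  obtain ⟨q, hq, hqr, hqc⟩ := hCoptS₁
  constructor
  · -- Copt/S - n ≤ CoptS
    have hlen : (q.length : ℝ) ≤ Fintype.card V := by
      have h1 : (q.map hd).Nodup := (List.nodup_cons.mp hq.2).2
      have h2 : (q.map hd).length ≤ Fintype.card V := h1.length_le_card
      simpa using (Nat.cast_le (α := ℝ)).mpr h2
    have key : Copt ≤ S * CoptS + S * Fintype.card V := by
      have h1 : Copt ≤ (q.map c).sum := hCopt₂ q hq hqr
      have h2 : (q.map c).sum ≤ (q.map fun e => S * ((⌊c e / S⌋ : ℝ) + 1)).sum := by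
        apply List.sum_le_sum
        intro e _
        have h := Int.lt_floor_add_one (c e / S)
        rw [div_lt_iff₀ hS] at h
        nlinarith
      rw [sum_map_scaled_aux, hqc] at h2
      nlinarith
    rw [div_sub' hS.ne', div_le_iff₀ hS]
    nlinarith
  · -- CoptS ≤ Copt/S
    have h1 : CoptS ≤ (p.map fun e => (⌊c e / S⌋ : ℝ)).sum := hCoptS₂ p hp hpr
    have h2 : (p.map fun e => (⌊c e / S⌋ : ℝ)).sum ≤ (p.map fun e => c e / S).sum := by
      apply List.sum_le_sum
      intro e _
      exact Int.floor_le _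
    rw [sum_map_div_aux, hpc] at h2
    linarith
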